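/- Let X = {(2^c a, 2^c b, 2^c) : a, b, c ∈ ℤ} ⊆ U, equipped with the hyperbolic metric d_H. Then X has bounded geometry: for every r > 0 there exists N_r such that for every x ∈ X the set {y ∈ X : d_H(x,y) ≤ r} has cardinality at most N_r. -/

import Mathlib

/-- `arccosh t = log (t + √(t² - 1))`. -/
noncomputable def arcosh (t : ℝ) : ℝ := Real.log (t + Real.sqrt (t ^ 2 - 1))

/-- The upper half-space `U = {p ∈ ℝ³ : p₃ > 0}`. -/
def upperHalfSpace : Set (ℝ × ℝ × ℝ) := {p | 0 < p.2.2}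

/-- The hyperbolic distance in the upper half-space model of `ℍ³`. -/
noncomputable def dH (p q : ℝ × ℝ × ℝ) : ℝ :=
  arcosh (1 + ((p.1 - q.1) ^ 2 + (p.2.1 - q.2.1) ^ 2 + (p.2.2 - q.2.2) ^ 2) /
    (2 * p.2.2 * q.2.2))

/-- The set `X = {(2^c a, 2^c b, 2^c) : a, b, c ∈ ℤ}`. -/
def Xset : Set (ℝ × ℝ × ℝ) :=
  {p | ∃ a b c : ℤ, p = ((2 : ℝ) ^ c * a, (2 : ℝ) ^ c * b, (2 : ℝ) ^ c)}

lemma le_exp_of_arcosh_le {t r : ℝ} (ht : 1 ≤ t) (h : arcosh t ≤ r) : t ≤ Real.exp r := by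
  have h1 : 0 ≤ Real.sqrt (t ^ 2 - 1) := Real.sqrt_nonneg _
  have h2 : (0:ℝ) < t + Real.sqrt (t ^ 2 - 1) := by linarith
  calc t ≤ t + Real.sqrt (t ^ 2 - 1) := by linarith
    _ = Real.exp (arcosh t) := by rw [arcosh, Real.exp_log h2]
    _ ≤ Real.exp r := Real.exp_le_exp.2 h


set_option maxHeartbeats 1000000 in
/-- The set `X = {(2^c a, 2^c b, 2^c) : a, b, c ∈ ℤ}` has bounded
geometry for the hyperbolic metric: for every `r > 0` there is a uniform bound
`N_r` on the cardinality of closed balls of radius `r` in `X`. -/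
theorem Xset_bounded_geometry :
    ∀ r : ℝ, 0 < r → ∃ N : ℕ, ∀ x ∈ Xset,
      {y | y ∈ Xset ∧ dH x y ≤ r}.Finite ∧
      {y | y ∈ Xset ∧ dH x y ≤ r}.ncard ≤ N := by
  intro r hr
  set E := Real.exp r with hEdef
  have hE1 : 1 ≤ E := by have := Real.add_one_le_exp r; linarith
  set D : ℕ := ⌈2 * E⌉₊ with hDdef
  set M : ℕ := ⌈2 * E + 1⌉₊ with hMdef
  set B : Finset (ℤ × ℤ × ℤ) :=
    Finset.Icc (-(D:ℤ)) D ×ˢ Finset.Icc (-(M:ℤ)) M ×ˢ Finset.Icc (-(M:ℤ)) M with hBdef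
  refine ⟨B.card, ?_⟩
  rintro x ⟨a, b, c, rfl⟩
  set g : ℤ × ℤ × ℤ → ℝ × ℝ × ℝ := fun p =>
    ((2:ℝ)^(c + p.1) * ((p.2.1 : ℝ) + (⌊(2:ℝ)^c * a / (2:ℝ)^(c + p.1)⌋ : ℤ)),
     (2:ℝ)^(c + p.1) * ((p.2.2 : ℝ) + (⌊(2:ℝ)^c * b / (2:ℝ)^(c + p.1)⌋ : ℤ)),
     (2:ℝ)^(c + p.1)) with hg
  have hsub : {y | y ∈ Xset ∧ dH ((2:ℝ)^c * a, (2:ℝ)^c * b, (2:ℝ)^c) y ≤ r} ⊆ g '' ↑B := by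
    rintro y ⟨⟨a', b', c', rfl⟩, hdist⟩
    have hp : (0:ℝ) < 2 ^ c := zpow_pos (by norm_num) c
    have hq : (0:ℝ) < 2 ^ c' := zpow_pos (by norm_num) c'
    simp only [dH] at hdist
    set Q : ℝ := ((2:ℝ)^c * a - 2^c' * a')^2 + ((2:ℝ)^c * b - 2^c' * b')^2 +
      ((2:ℝ)^c - 2^c')^2 with hQdef
    have hQ0 : 0 ≤ Q := by positivity
    have hden : (0:ℝ) < 2 * 2^c * 2^c' := by positivity
    have hT1 : (1:ℝ) ≤ 1 + Q / (2 * 2^c * 2^c') := by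
      have := div_nonneg hQ0 hden.le; linarith
    have hTE : 1 + Q / (2 * 2^c * 2^c') ≤ E := le_exp_of_arcosh_le hT1 hdist
    have hQle : Q ≤ (E - 1) * (2 * 2^c * 2^c') := by
      rw [← div_le_iff₀ hden]; linarith
    -- ratio bounds
    set t : ℝ := (2:ℝ)^(c' - c) with htdef
    set w : ℝ := (2:ℝ)^(c - c') with hwdef
    have ht0 : 0 < t := zpow_pos (by norm_num) _
    have hw0 : 0 < w := zpow_pos (by norm_num) _
    have htw : w * t = 1 := by
      rw [hwdef, htdef, ← zpow_add₀ (by norm_num : (2:ℝ) ≠ 0)]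
      norm_num
    have hqt : (2:ℝ)^c' = t * 2^c := by
      rw [htdef, ← zpow_add₀ (by norm_num : (2:ℝ) ≠ 0)]; ring_nf
    have hpw : (2:ℝ)^c = w * 2^c' := by
      rw [hwdef, ← zpow_add₀ (by norm_num : (2:ℝ) ≠ 0)]; ring_nf
    have h3 : ((2:ℝ)^c - 2^c')^2 ≤ (E - 1) * (2 * 2^c * 2^c') := by
      have s1 := sq_nonneg ((2:ℝ)^c * a - 2^c' * a')
      have s2 := sq_nonneg ((2:ℝ)^c * b - 2^c' * b')
      have : ((2:ℝ)^c - 2^c')^2 ≤ Q := by rw [hQdef]; linarith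
      linarith
    have hquad : (1 - t)^2 ≤ 2 * (E - 1) * t := by
      have hp2 : (0:ℝ) < ((2:ℝ)^c)^2 := by positivity
      have h3' : (1 - t)^2 * ((2:ℝ)^c)^2 ≤ (2 * (E - 1) * t) * ((2:ℝ)^c)^2 := by
        calc (1 - t)^2 * ((2:ℝ)^c)^2 = ((2:ℝ)^c - t * 2^c)^2 := by ring
          _ ≤ (E - 1) * (2 * 2^c * (t * 2^c)) := by rw [← hqt]; exact h3
          _ = (2 * (E - 1) * t) * ((2:ℝ)^c)^2 := by ring
      exact le_of_mul_le_mul_right h3' hp2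
    have ht2E : t ≤ 2 * E := by nlinarith
    have hw2E : w ≤ 2 * E := by nlinarith [mul_pos hw0 ht0]
    -- bound on |c' - c|
    have hnD : (c' - c).natAbs ≤ D := by
      set n : ℕ := (c' - c).natAbs with hn
      have hpow : (2:ℝ)^(n:ℕ) ≤ 2 * E := by
        rcases le_total c c' with h | h
        · have : (2:ℝ)^(n:ℕ) = t := by
            rw [htdef, ← zpow_natCast (2:ℝ) n]; congr 1; omega
          rw [this]; exact ht2E
        · have : (2:ℝ)^(n:ℕ) = w := by
            rw [hwdef, ← zpow_natCast (2:ℝ) n]; congr 1; omega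
          rw [this]; exact hw2E
      have h1 : (n:ℝ) < 2^(n:ℕ) := by
        have := Nat.lt_two_pow_self (n := n)
        exact_mod_cast this
      have h2 : (n:ℝ) ≤ 2 * E := by linarith
      have := Nat.le_ceil (2 * E)
      exact_mod_cast le_trans h2 this
    have hdmem : c' - c ∈ Finset.Icc (-(D:ℤ)) (D:ℤ) := by
      rw [Finset.mem_Icc]; omega
    -- bound on the horizontal coordinates
    have horiz : ∀ z z' : ℤ, ((2:ℝ)^c * z - 2^c' * z')^2 ≤ (E - 1) * (2 * 2^c * 2^c') →
        z' - ⌊(2:ℝ)^c * z / 2^c'⌋ ∈ Finset.Icc (-(M:ℤ)) (M:ℤ) := by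
      intro z z' h1
      set s : ℝ := (2:ℝ)^c * z / 2^c' with hs
      have hse : (s - z') * 2^c' = (2:ℝ)^c * z - 2^c' * z' := by
        rw [hs]; field_simp
      have key : (s - z')^2 ≤ (2*E)^2 := by
        have hq2 : (0:ℝ) < ((2:ℝ)^c')^2 := by positivity
        have step : (s - z')^2 * ((2:ℝ)^c')^2 ≤ (2*E)^2 * ((2:ℝ)^c')^2 := by
          calc (s - z')^2 * ((2:ℝ)^c')^2 = ((s - z') * 2^c')^2 := by ring
            _ = ((2:ℝ)^c * z - 2^c' * z')^2 := by rw [hse]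
            _ ≤ (E - 1) * (2 * (w * 2^c') * 2^c') := by rw [← hpw]; exact h1
            _ = (2 * (E - 1) * w) * ((2:ℝ)^c')^2 := by ring
            _ ≤ (2*E)^2 * ((2:ℝ)^c')^2 := by
                have hEw : 2 * (E - 1) * w ≤ (2*E)^2 := by nlinarith
                exact mul_le_mul_of_nonneg_right hEw (sq_nonneg _)
        exact le_of_mul_le_mul_right step hq2
      have habs : |s - (z':ℝ)| ≤ 2*E := by
        rw [abs_le]
        constructor
        · nlinarith [sq_nonneg (s - z' + 2*E)]
        · nlinarith [sq_nonneg (s - z' - 2*E)]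
      have hf1 : (⌊s⌋:ℝ) ≤ s := Int.floor_le s
      have hf2 : s - 1 < (⌊s⌋:ℝ) := Int.sub_one_lt_floor s
      rw [abs_le] at habs
      have hcastle : |((z' - ⌊s⌋ : ℤ) : ℝ)| ≤ 2*E + 1 := by
        rw [abs_le]; push_cast; constructor <;> linarith
      have hM' : (2:ℝ)*E + 1 ≤ (M:ℝ) := Nat.le_ceil _
      have : |((z' - ⌊s⌋ : ℤ) : ℝ)| ≤ (M:ℝ) := le_trans hcastle hM'
      have habsz : |z' - ⌊s⌋| ≤ (M:ℤ) := by exact_mod_cast this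
      rw [Finset.mem_Icc]
      exact abs_le.1 habsz
    have h1 : ((2:ℝ)^c * a - 2^c' * a')^2 ≤ (E - 1) * (2 * 2^c * 2^c') := by
      have s2 := sq_nonneg ((2:ℝ)^c * b - 2^c' * b')
      have s3 := sq_nonneg ((2:ℝ)^c - 2^c')
      have : ((2:ℝ)^c * a - 2^c' * a')^2 ≤ Q := by rw [hQdef]; linarith
      linarith
    have h2 : ((2:ℝ)^c * b - 2^c' * b')^2 ≤ (E - 1) * (2 * 2^c * 2^c') := by
      have s2 := sq_nonneg ((2:ℝ)^c * a - 2^c' * a')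
      have s3 := sq_nonneg ((2:ℝ)^c - 2^c')
      have : ((2:ℝ)^c * b - 2^c' * b')^2 ≤ Q := by rw [hQdef]; linarith
      linarith
    refine ⟨(c' - c, a' - ⌊(2:ℝ)^c * a / 2^c'⌋, b' - ⌊(2:ℝ)^c * b / 2^c'⌋), ?_, ?_⟩
    · simp only [hBdef, Finset.coe_product, Set.mem_prod, Finset.mem_coe]
      exact ⟨hdmem, horiz a a' h1, horiz b b' h2⟩
    · have hcc : c + (c' - c) = c' := by ring
      simp only [hg, hcc]
      refine Prod.ext ?_ (Prod.ext ?_ ?_) <;> simp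
  have hfin : {y | y ∈ Xset ∧ dH ((2:ℝ)^c * a, (2:ℝ)^c * b, (2:ℝ)^c) y ≤ r}.Finite :=
    Set.Finite.subset (B.finite_toSet.image g) hsub
  refine ⟨hfin, ?_⟩
  calc {y | y ∈ Xset ∧ dH ((2:ℝ)^c * a, (2:ℝ)^c * b, (2:ℝ)^c) y ≤ r}.ncard
      ≤ (g '' ↑B).ncard := Set.ncard_le_ncard hsub (B.finite_toSet.image g)
    _ ≤ (↑B : Set (ℤ × ℤ × ℤ)).ncard := Set.ncard_image_le B.finite_toSet
    _ = B.card := Set.ncard_coe_finset B
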